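/- Let γ ∈ ℂ \ 2ℤ and let f_n be defined by f_{2l} = (2l/(2l+γ)) ∏_{k=1}^{l} (2k+γ)/(2k−γ), f_{2l+1} = ∏_{k=1}^{l} (2k+γ)/(2k−γ). If |f_{n+1} − f_n| = |f_n − f_{n−1}| holds for all n ≥ 1, then Re γ = 1. -/

import Mathlib

open Finset Complex

/-- If all edges of the discrete power function on the boundary row have equal
length, then `Re γ = 1`. -/
theorem discrete_power_equal_edges_re_eq_one
    (γ : ℂ) (hγ : ∀ k : ℤ, γ ≠ 2 * k)
    (f : ℕ → ℂ)
    (heven : ∀ l : ℕ,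
      f (2 * l) = (2 * l / (2 * l + γ)) * ∏ k ∈ Icc 1 l, (2 * (k : ℂ) + γ) / (2 * k - γ))
    (hodd : ∀ l : ℕ,
      f (2 * l + 1) = ∏ k ∈ Icc 1 l, (2 * (k : ℂ) + γ) / (2 * k - γ))
    (hlen : ∀ n : ℕ, 1 ≤ n →
      ‖f (n + 1) - f n‖ = ‖f n - f (n - 1)‖) :
    γ.re = 1 := by
  have hsub : (2 : ℂ) - γ ≠ 0 := by
    intro h
    exact hγ 1 (by push_cast; linear_combination -h)
  have hf0 : f 0 = 0 := by
    have := heven 0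
    simpa using this
  have hf1 : f 1 = 1 := by
    have := hodd 0
    simpa using this
  have hf2 : f 2 = 2 / (2 - γ) := by
    have hadd : (2 : ℂ) + γ ≠ 0 := by
      intro h
      exact hγ (-1) (by push_cast; linear_combination h)
    have := heven 1
    simp [Finset.Icc_self] at this
    rw [this]
    field_simp
  have h1 := hlen 1 le_rfl
  simp only [hf0, hf1, hf2, sub_zero, norm_one] at h1
  have key : ‖γ‖ = ‖2 - γ‖ := by
    have : (2 : ℂ) / (2 - γ) - 1 = γ / (2 - γ) := by
      field_simp
      ring
    rw [this, norm_div] at h1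
    have habs : ‖2 - γ‖ ≠ 0 := norm_ne_zero_iff.mpr hsub
    field_simp at h1
    linarith [h1, norm_nonneg γ, norm_nonneg (2 - γ)]
  have := congrArg (· ^ 2) key
  simp only [Complex.sq_norm] at this
  have hre : Complex.normSq γ = Complex.normSq (2 - γ) := this
  simp [Complex.normSq_apply, Complex.sub_re, Complex.sub_im] at hre
  nlinarith [hre]
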